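/- arXiv:2503.04010 — 4 statements merged into one kernel-verified Lean document; each statement's English description precedes it below -/
import Mathlib

section
/- Let d ≥ 2, ε ∈ (0, 1/4], and Θ = ([-1,1]_ε \ {0})^d where [-1,1]_ε denotes the ε-grid {ε·n : n ∈ ℤ} ∩ [-1,1]. Let A ⊆ [-1,1]^d be a finite action set containing the hypercube {-1,1}^d. If θ* ∈ Θ satisfies ‖θ*‖₁ − 2·min_i |θ*_i| ≥ dε, then there exists θ' ∈ Θ and an arm a' ∈ A such that a' is the unique best arm for θ' (i.e., ⟨θ', a'⟩ > ⟨θ', a⟩ for all a ∈ A with a ≠ a'), ⟨θ', a'⟩ = ⟨θ*, a'⟩, and ⟨θ*, a'⟩ < max_{a ∈ A} ⟨θ*, a⟩. -/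
lemma exists_partition (M : ℕ) (hM : 1 ≤ M) :
    ∀ d N : ℕ, d ≤ N → N ≤ d * M → ∃ k : Fin d → ℕ,
      (∀ i, 1 ≤ k i ∧ k i ≤ M) ∧ ∑ i, k i = N := by
  intro d
  induction d with
  | zero =>
    intro N h1 h2
    refine ⟨Fin.elim0, fun i => i.elim0, ?_⟩
    simp at h2 ⊢
    omega
  | succ d ih =>
    intro N h1 h2
    have hsm : (d + 1) * M = d * M + M := by ring
    rw [hsm] at h2
    set k0 := min M (N - d) with hk0
    have hk01 : 1 ≤ k0 := by omega
    have hk0M : k0 ≤ M := min_le_left _ _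
    have hdM : d ≤ d * M := Nat.le_mul_of_pos_right d hM
    have hd1 : d ≤ N - k0 := by omega
    have hd2 : N - k0 ≤ d * M := by omega
    obtain ⟨k, hk, hsum⟩ := ih (N - k0) hd1 hd2
    refine ⟨Fin.cons k0 k, ?_, ?_⟩
    · intro i
      refine Fin.cases ?_ ?_ i
      · simpa using ⟨hk01, hk0M⟩
      · intro j; simpa using hk j
    · rw [Fin.sum_cons, hsum]
      omega

set_option maxHeartbeats 1600000 in
/-- Discretized linear bandits: almost every instance has a decoy. -/
theorem linear_bandits_decoy (d : ℕ) (hd : 2 ≤ d) (ε : ℝ) (hε0 : 0 < ε) (hε1 : ε ≤ 1/4)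
    (A : Finset (Fin d → ℝ))
    (hA1 : ∀ a ∈ A, ∀ i, |a i| ≤ 1)
    (hAcube : ∀ a : Fin d → ℝ, (∀ i, a i = 1 ∨ a i = -1) → a ∈ A)
    (θs : Fin d → ℝ)
    (hθs : ∀ i, (∃ n : ℤ, θs i = ε * n) ∧ |θs i| ≤ 1 ∧ θs i ≠ 0)
    (hgap : (∑ i, |θs i|) - 2 * (Finset.univ.inf' ⟨⟨0, by omega⟩, Finset.mem_univ _⟩ fun i => |θs i|)
      ≥ d * ε) :
    ∃ θ' : Fin d → ℝ,
      (∀ i, (∃ n : ℤ, θ' i = ε * n) ∧ |θ' i| ≤ 1 ∧ θ' i ≠ 0) ∧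
      ∃ a' ∈ A,
        (∀ a ∈ A, a ≠ a' → ∑ i, θ' i * a i < ∑ i, θ' i * a' i) ∧
        (∑ i, θ' i * a' i) = (∑ i, θs i * a' i) ∧
        (∃ a ∈ A, (∑ i, θs i * a' i) < ∑ i, θs i * a i) := by
  have hne : (Finset.univ : Finset (Fin d)).Nonempty := ⟨⟨0, by omega⟩, Finset.mem_univ _⟩
  -- integer representation
  choose n hn using fun i => (hθs i).1
  obtain ⟨m, hm⟩ : ∃ m : Fin d → ℕ, m = fun i => (n i).natAbs := ⟨_, rfl⟩
  have habs : ∀ i, |θs i| = ε * m i := by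
    intro i
    have hcast : ((m i : ℕ) : ℝ) = |(n i : ℝ)| := by
      rw [hm]; simp [Nat.cast_natAbs]
    rw [hn i, abs_mul, abs_of_pos hε0, hcast]
  have hm1 : ∀ i, 1 ≤ m i := by
    intro i
    have h0 : θs i ≠ 0 := (hθs i).2.2
    have hni : n i ≠ 0 := by
      rintro h; rw [hn i, h] at h0; simp at h0
    rw [hm]
    exact Int.natAbs_pos.mpr hni
  have hmε : ∀ i, ε * m i ≤ 1 := fun i => (habs i) ▸ (hθs i).2.1
  -- min index
  obtain ⟨i₀, -, hi₀⟩ := Finset.exists_mem_eq_inf' hne (fun i => |θs i|)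
  have hmin : ∀ i, m i₀ ≤ m i := by
    intro i
    have h1 : |θs i₀| ≤ |θs i| := hi₀ ▸ Finset.inf'_le _ (Finset.mem_univ i)
    rw [habs i₀, habs i] at h1
    exact_mod_cast le_of_mul_le_mul_left h1 hε0
  -- max
  obtain ⟨jM, -, hjM⟩ := Finset.exists_mem_eq_sup' hne m
  obtain ⟨M, hMdef⟩ : ∃ M : ℕ, M = m jM := ⟨_, rfl⟩
  have hMle : ∀ i, m i ≤ M := by
    intro i
    rw [hMdef, ← hjM]
    exact Finset.le_sup' m (Finset.mem_univ i)
  have hM1 : 1 ≤ M := (hm1 jM).trans (hMle jM)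
  have hMε : ε * M ≤ 1 := by rw [hMdef]; exact hmε jM
  -- N
  have h2min : 2 * m i₀ ≤ ∑ i, m i := by
    have hdm : d * m i₀ ≤ ∑ i, m i := by
      calc d * m i₀ = ∑ _i : Fin d, m i₀ := by
            simp [Finset.sum_const, Finset.card_univ, mul_comm]
        _ ≤ ∑ i, m i := Finset.sum_le_sum fun i _ => hmin i
    nlinarith [hdm]
  obtain ⟨N, hNdef⟩ : ∃ N : ℕ, N = (∑ i, m i) - 2 * m i₀ := ⟨_, rfl⟩
  have hNcast : (N : ℝ) = (∑ i, (m i : ℝ)) - 2 * m i₀ := by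
    rw [hNdef]
    push_cast [Nat.cast_sub h2min]
    ring
  have hsumabs : (∑ i, |θs i|) = ε * ∑ i, (m i : ℝ) := by
    rw [Finset.mul_sum]; exact Finset.sum_congr rfl fun i _ => habs i
  have hgap' : ε * (N : ℝ) ≥ d * ε := by
    have h1 := hgap
    rw [hsumabs, hi₀, habs i₀] at h1
    rw [hNcast]
    nlinarith [h1]
  have hNd : d ≤ N := by
    have h2 : (d : ℝ) ≤ (N : ℝ) := by nlinarith [hgap']
    exact_mod_cast h2
  have hNM : N ≤ d * M := by
    have h3 : ∑ i, m i ≤ d * M := by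
      calc ∑ i, m i ≤ ∑ _i : Fin d, M := Finset.sum_le_sum fun i _ => hMle i
        _ = d * M := by simp [Finset.sum_const, Finset.card_univ]
    omega
  obtain ⟨k, hk, hksum⟩ := exists_partition M hM1 d N hNd hNM
  -- sign vectors
  obtain ⟨s, hs⟩ : ∃ s : Fin d → ℝ, s = fun i => if 0 < θs i then 1 else -1 := ⟨_, rfl⟩
  obtain ⟨a', ha'⟩ : ∃ a' : Fin d → ℝ, a' = fun i => if i = i₀ then -(s i) else s i := ⟨_, rfl⟩
  have hs_pm : ∀ i, s i = 1 ∨ s i = -1 := by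
    intro i; simp only [hs]; split <;> simp
  have ha'_pm : ∀ i, a' i = 1 ∨ a' i = -1 := by
    intro i; simp only [ha']; rcases hs_pm i with h | h <;> split <;> simp [h]
  have hssq : ∀ i, s i * s i = 1 := by
    intro i; rcases hs_pm i with h | h <;> rw [h] <;> norm_num
  have ha'sq : ∀ i, a' i * a' i = 1 := by
    intro i; rcases ha'_pm i with h | h <;> rw [h] <;> norm_num
  have hθss : ∀ i, θs i * s i = |θs i| := by
    intro i
    simp only [hs]
    split
    · rename_i h; rw [abs_of_pos h]; ring
    · rename_i h
      rw [abs_of_nonpos (le_of_not_gt h)]; ring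
  have hkey : ∀ i, θs i * a' i = |θs i| - (if i = i₀ then 2 * |θs i₀| else 0) := by
    intro i
    simp only [ha']
    split
    · rename_i h; subst h
      rw [show θs i * -(s i) = -(θs i * s i) by ring, hθss i]; ring
    · rw [hθss i]; ring
  have hθsa' : (∑ i, θs i * a' i) = ε * N := by
    have h4 : (∑ i, θs i * a' i) = (∑ i, |θs i|) - 2 * |θs i₀| := by
      rw [Finset.sum_congr rfl fun i _ => hkey i, Finset.sum_sub_distrib,
        Finset.sum_ite_eq' Finset.univ i₀ (fun _ => 2 * |θs i₀|)]
      simp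
    rw [h4, hsumabs, habs i₀, hNcast]; ring
  -- θ'
  obtain ⟨θ', hθ'⟩ : ∃ θ' : Fin d → ℝ, θ' = fun i => (ε * k i) * a' i := ⟨_, rfl⟩
  have hθ'i : ∀ i, θ' i = (ε * k i) * a' i := fun i => by rw [hθ']
  have hθ'a' : (∑ i, θ' i * a' i) = ε * N := by
    have h5 : ∀ i, θ' i * a' i = ε * k i := by
      intro i; rw [hθ'i i, mul_assoc, ha'sq i, mul_one]
    rw [Finset.sum_congr rfl fun i _ => h5 i, ← Finset.mul_sum]
    congr 1
    exact_mod_cast congrArg (Nat.cast : ℕ → ℝ) hksum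
  have hkpos : ∀ i, (0:ℝ) < ε * k i := by
    intro i
    have h6 : (1:ℝ) ≤ k i := by exact_mod_cast (hk i).1
    nlinarith
  refine ⟨θ', ?_, a', hAcube a' ha'_pm, ?_, ?_, ?_⟩
  · intro i
    refine ⟨?_, ?_, ?_⟩
    · rcases ha'_pm i with h | h
      · exact ⟨k i, by rw [hθ'i i, h]; push_cast; ring⟩
      · exact ⟨-(k i), by rw [hθ'i i, h]; push_cast; ring⟩
    · have h1 : |θ' i| = ε * k i := by
        rw [hθ'i i, abs_mul]
        rcases ha'_pm i with h | h <;>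
          rw [h] <;> simp [abs_of_pos (hkpos i), le_of_lt (hkpos i)]
      rw [h1]
      have hkM : (k i : ℝ) ≤ M := by exact_mod_cast (hk i).2
      nlinarith [hMε]
    · rcases ha'_pm i with h | h <;>
        · rw [hθ'i i, h]
          have := hkpos i
          intro hc
          nlinarith
  · intro a haA hane
    have hcoord : ∀ i, θ' i * a i ≤ θ' i * a' i := by
      intro i
      rw [hθ'i i, mul_assoc (ε * (k i : ℝ)) (a' i) (a i),
        mul_assoc (ε * (k i : ℝ)) (a' i) (a' i)]
      refine mul_le_mul_of_nonneg_left ?_ (le_of_lt (hkpos i))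
      rw [ha'sq i]
      calc a' i * a i ≤ |a' i * a i| := le_abs_self _
        _ = |a i| := by rcases ha'_pm i with h | h <;> rw [h] <;> simp
        _ ≤ 1 := hA1 a haA i
    have hj : ∃ j, a j ≠ a' j := by
      by_contra h
      push_neg at h
      exact hane (funext h)
    obtain ⟨j, hj⟩ := hj
    refine Finset.sum_lt_sum (fun i _ => hcoord i) ⟨j, Finset.mem_univ j, ?_⟩
    rw [hθ'i j, mul_assoc (ε * (k j : ℝ)) (a' j) (a j),
      mul_assoc (ε * (k j : ℝ)) (a' j) (a' j)]
    refine mul_lt_mul_of_pos_left ?_ (hkpos j)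
    rw [ha'sq j]
    have haj := hA1 a haA j
    rw [abs_le] at haj
    rcases ha'_pm j with h | h
    · rw [h, one_mul]
      exact lt_of_le_of_ne haj.2 (by rw [h] at hj; exact hj)
    · rw [h]
      have h7 : a j ≠ -1 := by rw [h] at hj; exact hj
      have h8 : -1 < a j := lt_of_le_of_ne haj.1 (fun hc => h7 hc.symm)
      nlinarith
  · rw [hθ'a', hθsa']
  · refine ⟨s, hAcube s hs_pm, ?_⟩
    have hsum_s : (∑ i, θs i * s i) = ∑ i, |θs i| :=
      Finset.sum_congr rfl fun i _ => hθss i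
    rw [hθsa', hsum_s, hsumabs]
    have hpos : (0:ℝ) < ε * m i₀ := by
      have h9 : (1:ℝ) ≤ m i₀ := by exact_mod_cast hm1 i₀
      nlinarith
    rw [hNcast]
    nlinarith [hpos]
end

section
/- Let A be a finite nonempty set of arms, and for each a ∈ A let S_a ⊆ ℝ^d be a finite set spanning ℝ^d. Let X = ∏_{a∈A} S_a and let π : X → A be any policy. Then there exists a finite set X₀ ⊆ X with |X₀| ≤ d such that the vectors {x(π(x)) : x ∈ X₀} span ℝ^d. -/
/-- Greedy span construction: for any policy π there is a set of at most d
contexts whose chosen-arm feature vectors span ℝ^d. -/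
theorem exists_spanning_contexts (d : ℕ)
    (A : Type*) [Fintype A] [Nonempty A]
    (S : A → Finset (Fin d → ℝ))
    (hS : ∀ a, Submodule.span ℝ (S a : Set (Fin d → ℝ)) = ⊤)
    (π : (A → (Fin d → ℝ)) → A) :
    ∃ X₀ : Finset (A → (Fin d → ℝ)),
      X₀.card ≤ d ∧
      (∀ x ∈ X₀, ∀ a, x a ∈ S a) ∧
      Submodule.span ℝ {v : Fin d → ℝ | ∃ x ∈ X₀, v = x (π x)} = ⊤ := by
  classical
  -- Key step: for a proper submodule W, there is a valid context whose chosen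
  -- feature vector is outside W.
  have key : ∀ (W : Submodule ℝ (Fin d → ℝ)), W ≠ ⊤ →
      ∃ x : A → (Fin d → ℝ), (∀ a, x a ∈ S a) ∧ x (π x) ∉ W := by
    intro W hW
    have h : ∀ a, ∃ v, v ∈ S a ∧ v ∉ W := by
      intro a
      by_contra hc
      push_neg at hc
      have hsub : (S a : Set (Fin d → ℝ)) ⊆ (W : Set (Fin d → ℝ)) := by
        intro v hv; exact hc v hv
      have := Submodule.span_le.mpr hsub
      rw [hS a] at this
      exact hW (top_le_iff.mp this)
    refine ⟨fun a => (h a).choose, fun a => ((h a).choose_spec).1, ?_⟩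
    exact ((h _).choose_spec).2
  have main : ∀ k : ℕ, ∃ X₀ : Finset (A → (Fin d → ℝ)),
      X₀.card ≤ k ∧ (∀ x ∈ X₀, ∀ a, x a ∈ S a) ∧
      (Submodule.span ℝ {v : Fin d → ℝ | ∃ x ∈ X₀, v = x (π x)} = ⊤ ∨
        k ≤ Module.finrank ℝ
          (Submodule.span ℝ {v : Fin d → ℝ | ∃ x ∈ X₀, v = x (π x)})) := by
    intro k
    induction k with
    | zero => exact ⟨∅, by simp, by simp, Or.inr (Nat.zero_le _)⟩
    | succ k ih =>
      obtain ⟨X₀, hcard, hval, hspan⟩ := ih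
      rcases hspan with htop | hrank
      · exact ⟨X₀, hcard.trans (Nat.le_succ _), hval, Or.inl htop⟩
      · by_cases htop : Submodule.span ℝ {v : Fin d → ℝ | ∃ x ∈ X₀, v = x (π x)} = ⊤
        · exact ⟨X₀, hcard.trans (Nat.le_succ _), hval, Or.inl htop⟩
        obtain ⟨x, hx, hxW⟩ := key _ htop
        refine ⟨insert x X₀, ?_, ?_, ?_⟩
        · calc (insert x X₀).card ≤ X₀.card + 1 := Finset.card_insert_le _ _
            _ ≤ k + 1 := Nat.add_le_add_right hcard 1
        · intro y hy a
          rcases Finset.mem_insert.mp hy with rfl | hy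
          · exact hx a
          · exact hval y hy a
        · right
          set W := Submodule.span ℝ {v : Fin d → ℝ | ∃ x ∈ X₀, v = x (π x)} with hWdef
          set W' := Submodule.span ℝ
            {v : Fin d → ℝ | ∃ y ∈ insert x X₀, v = y (π y)} with hW'def
          have hle : W ≤ W' := by
            apply Submodule.span_mono
            rintro v ⟨y, hy, rfl⟩
            exact ⟨y, Finset.mem_insert_of_mem hy, rfl⟩
          have hmem : x (π x) ∈ W' := Submodule.subset_span ⟨x, Finset.mem_insert_self _ _, rfl⟩
          have hlt : W < W' := lt_of_le_of_ne hle (fun h => hxW (h ▸ hmem))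
          have := Submodule.finrank_lt_finrank_of_lt hlt
          omega
  obtain ⟨X₀, hcard, hval, hspan⟩ := main d
  refine ⟨X₀, hcard, hval, ?_⟩
  rcases hspan with htop | hrank
  · exact htop
  · have hle : Module.finrank ℝ
        (Submodule.span ℝ {v : Fin d → ℝ | ∃ x ∈ X₀, v = x (π x)}) ≤
        Module.finrank ℝ (Fin d → ℝ) := Submodule.finrank_le _
    have hd : Module.finrank ℝ (Fin d → ℝ) = d := Module.finrank_fin_fun ℝ
    apply Submodule.eq_top_of_finrank_eq
    rw [hd]
    exact le_antisymm (hle.trans hd.le) hrank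
end

section
/- Let d ≥ 1, Θ ⊆ ℝ^d finite, and for each arm a ∈ A (A finite) let S_a ⊆ [-1,1]^d be finite and span ℝ^d. Let X = ∏_a S_a, and define f_θ(x, a) = ⟨x(a), θ⟩. Then for every θ* ∈ Θ and every policy π : X → A, if θ ∈ Θ satisfies ⟨x(π(x)), θ⟩ = ⟨x(π(x)), θ*⟩ for all x ∈ X, then θ = θ*. (Hence self-identifiability holds: observing the rewards of any policy on all contexts determines the parameter.) -/
/-- Self-identifiability for linear contextual bandits with per-arm spanning
context sets: the rewards of any policy on all contexts determine θ*. -/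
theorem linear_cb_self_identifiable (d : ℕ) (hd : 1 ≤ d)
    (Θ : Finset (Fin d → ℝ))
    (A : Type*) [Fintype A] [Nonempty A]
    (S : A → Finset (Fin d → ℝ))
    (hSbdd : ∀ a, ∀ v ∈ S a, ∀ i, |v i| ≤ 1)
    (hSspan : ∀ a, Submodule.span ℝ (S a : Set (Fin d → ℝ)) = ⊤)
    (θs : Fin d → ℝ) (hθs : θs ∈ Θ)
    (π : (A → (Fin d → ℝ)) → A)
    (θ : Fin d → ℝ) (hθ : θ ∈ Θ)
    (hagree : ∀ x : A → (Fin d → ℝ), (∀ a, x a ∈ S a) →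
      ∑ i, x (π x) i * θ i = ∑ i, x (π x) i * θs i) :
    θ = θs := by
  by_contra hne
  set w : Fin d → ℝ := θ - θs with hw
  have hwne : w ≠ 0 := sub_ne_zero.mpr hne
  -- linear functional u ↦ ∑ i, u i * w i
  let φ : (Fin d → ℝ) →ₗ[ℝ] ℝ :=
    { toFun := fun u => ∑ i, u i * w i
      map_add' := by
        intro u v
        simp [add_mul, Finset.sum_add_distrib]
      map_smul' := by
        intro c u
        simp [Finset.mul_sum, mul_assoc] }
  have key : ∀ a : A, ∃ v ∈ S a, φ v ≠ 0 := by
    intro a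
    by_contra h
    push_neg at h
    have hker : (S a : Set (Fin d → ℝ)) ⊆ (LinearMap.ker φ : Submodule ℝ (Fin d → ℝ)) := by
      intro v hv
      exact LinearMap.mem_ker.mpr (h v hv)
    have : Submodule.span ℝ (S a : Set (Fin d → ℝ)) ≤ LinearMap.ker φ :=
      Submodule.span_le.mpr hker
    rw [hSspan a] at this
    have hφw : φ w = 0 := LinearMap.mem_ker.mp (this Submodule.mem_top)
    have : ∑ i, w i * w i = 0 := hφw
    have hwz : w = 0 := by
      funext i
      have hnn : ∀ j ∈ Finset.univ, 0 ≤ w j * w j := fun j _ => mul_self_nonneg _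
      have := (Finset.sum_eq_zero_iff_of_nonneg hnn).mp this i (Finset.mem_univ i)
      exact mul_self_eq_zero.mp this
    exact hwne hwz
  choose x hxS hxφ using key
  have hag := hagree x hxS
  have : φ (x (π x)) = 0 := by
    have : (∑ i, x (π x) i * θ i) - (∑ i, x (π x) i * θs i) = 0 := by
      rw [hag]; ring
    rw [← this]
    simp only [φ, LinearMap.coe_mk, AddHom.coe_mk, hw]
    rw [← Finset.sum_sub_distrib]
    congr 1
    funext i
    simp [Pi.sub_apply]
    ring
  exact hxφ (π x) this
end

section
/- Let (A, D) be a finite metric space, ε > 0, and R = {ε·n : n ∈ ℕ} ∩ [0,1]. Assume D takes values in R. Let f : A → R be a 1-Lipschitz function with respect to D (|f(a) − f(a')| ≤ D(a,a')) with a unique maximizer a*, and suppose there exists an arm a₀ ≠ a* with 0 < f(a₀) < f(a*). Then the function f'(a) := max(0, f(a₀) − D(a₀, a)) satisfies: (i) f' takes values in R, (ii) f' is 1-Lipschitz with respect to D, (iii) a₀ is the unique maximizer of f', and (iv) f'(a₀) = f(a₀) < f(a*). -/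
/-- Discretized Lipschitz bandits: the cone function f'(a) = max(0, f(a₀) − D(a₀,a))
is a grid-valued Lipschitz decoy for f with decoy arm a₀. -/
theorem lipschitz_bandits_decoy (A : Type*) [MetricSpace A] [Fintype A]
    (ε : ℝ) (hε : 0 < ε)
    (hD : ∀ a a' : A, (∃ n : ℕ, dist a a' = ε * n) ∧ dist a a' ≤ 1)
    (f : A → ℝ)
    (hfR : ∀ a, (∃ n : ℕ, f a = ε * n) ∧ f a ≤ 1)
    (hfLip : ∀ a a' : A, |f a - f a'| ≤ dist a a')
    (astar : A) (hstar : ∀ a, a ≠ astar → f a < f astar)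
    (a₀ : A) (ha₀ : a₀ ≠ astar) (ha₀pos : 0 < f a₀) (ha₀lt : f a₀ < f astar) :
    (∀ a, (∃ n : ℕ, max 0 (f a₀ - dist a₀ a) = ε * n) ∧ max 0 (f a₀ - dist a₀ a) ≤ 1) ∧
    (∀ a a' : A, |max 0 (f a₀ - dist a₀ a) - max 0 (f a₀ - dist a₀ a')| ≤ dist a a') ∧
    (∀ a, a ≠ a₀ → max 0 (f a₀ - dist a₀ a) < max 0 (f a₀ - dist a₀ a₀)) ∧
    max 0 (f a₀ - dist a₀ a₀) = f a₀ ∧ f a₀ < f astar := by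
  have hself : max 0 (f a₀ - dist a₀ a₀) = f a₀ := by
    simp [dist_self, le_of_lt ha₀pos]
  refine ⟨?_, ?_, ?_, hself, ha₀lt⟩
  · intro a
    obtain ⟨m, hm⟩ := (hfR a₀).1
    obtain ⟨n, hn⟩ := (hD a₀ a).1
    constructor
    · rcases le_or_gt (f a₀ - dist a₀ a) 0 with h | h
      · exact ⟨0, by simp [max_eq_left h]⟩
      · refine ⟨m - n, ?_⟩
        have hnm : n ≤ m := by
          by_contra hc
          push_neg at hc
          have : ε * m < ε * n := by
            exact (mul_lt_mul_iff_right₀ hε).2 (by exact_mod_cast hc)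
          nlinarith [hm, hn]
        rw [max_eq_right h.le, hm, hn]
        push_cast [Nat.cast_sub hnm]
        ring
    · have := (hfR a₀).2
      have := dist_nonneg (x := a₀) (y := a)
      have h01 : (0:ℝ) ≤ 1 := zero_le_one
      rcases le_total 0 (f a₀ - dist a₀ a) with h | h
      · rw [max_eq_right h]; linarith
      · rw [max_eq_left h]; linarith
  · intro a a'
    have htri : |dist a₀ a' - dist a₀ a| ≤ dist a a' := by simpa [dist_comm] using abs_dist_sub_le a' a a₀
    have h1 : |max 0 (f a₀ - dist a₀ a) - max 0 (f a₀ - dist a₀ a')| ≤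
        |(f a₀ - dist a₀ a) - (f a₀ - dist a₀ a')| := by simpa [max_comm] using abs_max_sub_max_le_abs (f a₀ - dist a₀ a) (f a₀ - dist a₀ a') 0
    calc |max 0 (f a₀ - dist a₀ a) - max 0 (f a₀ - dist a₀ a')|
        ≤ |(f a₀ - dist a₀ a) - (f a₀ - dist a₀ a')| := h1
      _ = |dist a₀ a' - dist a₀ a| := by ring_nf
      _ ≤ dist a a' := htri
  · intro a ha
    rw [hself]
    have hd : 0 < dist a₀ a := dist_pos.2 (Ne.symm ha)
    exact max_lt ha₀pos (by linarith)
end
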